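/- (Gluing, matching case.) Let F be a field, let ℓ ≥ d ≥ 0 be integers, let r ≥ 2ℓ+2 and I = [r]. For each h ∈ [ℓ+1], let P^{(h)} ∈ F(I∖{2h}, d). For a function Q : {0,1}^J → F with 2h ∈ J and 2h−1 ∈ J, define Q|_h : {0,1}^{J∖{2h}} → F by Q|_h(x) = Q(x̃), where x̃ agrees with x on J∖{2h} and x̃_{2h} = x_{2h−1}. Suppose that for all distinct h, h' ∈ [ℓ+1], P^{(h)}|_{h'} = P^{(h')}|_{h} as functions on {0,1}^{I∖{2h, 2h'}}. Then there exists P ∈ F(I, d) such that P|_h = P^{(h)} for every h ∈ [ℓ+1]. -/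

import Mathlib

set_option linter.unusedSectionVars false
set_option maxHeartbeats 1000000

/-- `IsPolyDeg d f` means `f : {0,1}^ι → F` is computed by a multilinear polynomial of
total degree at most `d`. -/
def IsPolyDeg {ι : Type*} [Fintype ι] [DecidableEq ι] {F : Type*} [Field F]
    (d : ℕ) (f : (ι → Bool) → F) : Prop :=
  ∃ α : Finset ι → F, (∀ S : Finset ι, d < S.card → α S = 0) ∧
    ∀ x : ι → Bool, f x = ∑ S : Finset ι, α S * ∏ i ∈ S, (if x i then (1 : F) else 0)

/-- The substitution operator: `(subst j i Q)(x) = Q(x̃)` where `x̃` agrees with `x` except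
that `x̃_j = x_i`. A function of the form `subst j i Q` does not depend on coordinate `j`,
so it faithfully represents the restriction of `Q` to `{0,1}^{I∖{j}}` obtained by
identifying `X_j` with `X_i`. -/
def subst {r : ℕ} {F : Type*} (j i : Fin r) (Q : (Fin r → Bool) → F) :
    (Fin r → Bool) → F :=
  fun x => Q (Function.update x j (x i))

/-- For `h ∈ [ℓ+1]` (0-indexed `h : Fin (ℓ+1)`), the pair of indices `{2h−1, 2h}` of the
`h`-th matching edge, 0-indexed as `(2h, 2h+1)`; the first is kept, the second is removed by
the restriction `Q ↦ Q|_h`. -/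
def pairIdx (ℓ r : ℕ) (hr : 2 * ℓ + 2 ≤ r) (h : Fin (ℓ + 1)) : Fin r × Fin r :=
  (⟨2 * h.val, by have := h.isLt; omega⟩, ⟨2 * h.val + 1, by have := h.isLt; omega⟩)



section Coef
variable {ι : Type*} [Fintype ι] [DecidableEq ι] {F : Type*} [Field F]

/-- monomial indicator function -/
def mono (S : Finset ι) (x : ι → Bool) : F := ∏ i ∈ S, (if x i then (1:F) else 0)

/-- canonical multilinear coefficients -/
def coef (f : (ι → Bool) → F) (S : Finset ι) : F :=
  ∑ T ∈ S.powerset, (-1:F)^((S \ T).card) * f (fun i => decide (i ∈ T))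

lemma sum_pm (A : Finset ι) :
    ∑ R ∈ A.powerset, (-1:F)^R.card = if A = ∅ then 1 else 0 := by
  have := @Finset.sum_powerset_neg_one_pow_card ι _ A
  have : ((∑ m ∈ A.powerset, (-1 : ℤ) ^ m.card : ℤ) : F)
      = ((if A = ∅ then (1:ℤ) else 0 : ℤ) : F) := by rw [this]
  push_cast at this
  simpa using this

lemma isum (B C : Finset ι) :
    ∑ S ∈ C.powerset, (if B ⊆ S then (-1:F)^((S \ B).card) else 0)
      = if B = C then 1 else 0 := by
  by_cases hBC : B ⊆ C
  · rw [Finset.sum_ite, Finset.sum_const_zero, add_zero]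
    have hbij : ∑ S ∈ C.powerset.filter (fun S => B ⊆ S), (-1:F)^((S \ B).card)
        = ∑ R ∈ (C \ B).powerset, (-1:F)^R.card := by
      apply Finset.sum_nbij' (fun S => S \ B) (fun R => R ∪ B)
      · intro S hS
        simp only [Finset.mem_filter, Finset.mem_powerset] at hS ⊢
        exact Finset.sdiff_subset_sdiff hS.1 (le_refl _)
      · intro R hR
        simp only [Finset.mem_filter, Finset.mem_powerset] at hR ⊢
        constructor
        · exact Finset.union_subset (hR.trans (Finset.sdiff_subset)) hBC
        · exact Finset.subset_union_right
      · intro S hS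
        simp only [Finset.mem_filter, Finset.mem_powerset] at hS
        exact Finset.sdiff_union_of_subset hS.2
      · intro R hR
        simp only [Finset.mem_powerset] at hR
        rw [Finset.union_sdiff_right]
        exact Finset.sdiff_eq_self_of_disjoint (Finset.disjoint_of_subset_left hR Finset.sdiff_disjoint)
      · intro S hS; rfl
    rw [hbij, sum_pm]
    by_cases h : B = C
    · rw [if_pos h, if_pos (by rw [h, Finset.sdiff_self])]
    · rw [if_neg h, if_neg (fun he => h (Finset.Subset.antisymm hBC
        (Finset.sdiff_eq_empty_iff_subset.mp he)))]
  · rw [Finset.sum_eq_zero, if_neg]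
    · intro h; exact hBC (h ▸ le_refl _)
    · intro S hS
      rw [Finset.mem_powerset] at hS
      rw [if_neg]
      intro hBS; exact hBC (hBS.trans hS)

lemma isum' (B C : Finset ι) :
    ∑ S ∈ C.powerset, (if B ⊆ S then (-1:F)^((C \ S).card) else 0)
      = if B = C then 1 else 0 := by
  by_cases hBC : B ⊆ C
  · have key : ∀ S ∈ C.powerset, (if B ⊆ S then (-1:F)^((C \ S).card) else 0)
        = (-1:F)^((C \ B).card) * (if B ⊆ S then (-1:F)^((S \ B).card) else 0) := by
      intro S hS
      rw [Finset.mem_powerset] at hS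
      by_cases hB : B ⊆ S
      · rw [if_pos hB, if_pos hB]
        have hcard : (C \ S).card + (S \ B).card = (C \ B).card := by
          rw [Finset.card_sdiff_of_subset hS, Finset.card_sdiff_of_subset hB, Finset.card_sdiff_of_subset hBC]
          have h1 := Finset.card_le_card hS
          have h2 := Finset.card_le_card hB
          omega
        rw [← hcard, pow_add, mul_assoc, ← pow_add, ← two_mul, pow_mul, neg_one_sq, one_pow,
          mul_one]
      · rw [if_neg hB, if_neg hB, mul_zero]
    rw [Finset.sum_congr rfl key, ← Finset.mul_sum, isum]
    by_cases h : B = C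
    · rw [if_pos h, h, Finset.sdiff_self, Finset.card_empty, pow_zero, one_mul]
    · rw [if_neg h, mul_zero]
  · rw [Finset.sum_eq_zero, if_neg]
    · intro h; exact hBC (h ▸ le_refl _)
    · intro S hS
      rw [Finset.mem_powerset] at hS
      rw [if_neg]
      intro hBS; exact hBC (hBS.trans hS)


lemma mono_eq (S : Finset ι) (x : ι → Bool) :
    (mono S x : F) = if ∀ i ∈ S, x i = true then 1 else 0 := by
  by_cases h : ∀ i ∈ S, x i = true
  · rw [if_pos h]
    exact Finset.prod_eq_one (fun i hi => by rw [h i hi]; simp)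
  · rw [if_neg h]
    push_neg at h
    obtain ⟨i, hi, hxi⟩ := h
    exact Finset.prod_eq_zero hi (by simp [hxi])

lemma mono_chi (S T : Finset ι) :
    (mono S (fun i => decide (i ∈ T)) : F) = if S ⊆ T then 1 else 0 := by
  rw [mono_eq]
  congr 1
  simp [Finset.subset_iff]

/-- every function on the cube equals its multilinear expansion -/
lemma eval_coef (f : (ι → Bool) → F) (x : ι → Bool) :
    f x = ∑ S : Finset ι, coef f S * mono S x := by
  set U : Finset ι := Finset.univ.filter (fun i => x i = true) with hU
  have hx : x = fun i => decide (i ∈ U) := by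
    funext i
    by_cases h : x i <;> simp [hU, h]
  have hmono : ∀ S : Finset ι, (mono S x : F) = if S ⊆ U then 1 else 0 := by
    intro S; rw [hx, mono_chi]
  symm
  calc ∑ S : Finset ι, coef f S * mono S x
      = ∑ S ∈ (Finset.univ : Finset ι).powerset,
          (if S ⊆ U then coef f S else 0) := by
        rw [Finset.powerset_univ]
        apply Finset.sum_congr rfl
        intro S _
        rw [hmono]
        by_cases h : S ⊆ U <;> simp [h]
    _ = ∑ S ∈ U.powerset, coef f S := by
        rw [← Finset.sum_filter]
        apply Finset.sum_congr _ (fun _ _ => rfl)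
        ext S; simp [Finset.mem_powerset]
    _ = ∑ S ∈ U.powerset, ∑ T ∈ S.powerset,
          (-1:F)^((S \ T).card) * f (fun i => decide (i ∈ T)) := rfl
    _ = ∑ T ∈ U.powerset, ∑ S ∈ U.powerset.filter (fun S => T ⊆ S),
          (-1:F)^((S \ T).card) * f (fun i => decide (i ∈ T)) := by
        apply Finset.sum_comm'
        intro S T
        simp only [Finset.mem_powerset, Finset.mem_filter]
        tauto
    _ = ∑ T ∈ U.powerset, (if T = U then 1 else 0) * f (fun i => decide (i ∈ T)) := by
        apply Finset.sum_congr rfl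
        intro T _
        rw [← Finset.sum_mul]
        congr 1
        rw [Finset.sum_filter, ← isum T U]
    _ = f x := by
        rw [Finset.sum_eq_single U (fun T _ hT => by rw [if_neg hT, zero_mul])
            (fun hU' => absurd (Finset.mem_powerset_self U) hU')]
        rw [if_pos rfl, one_mul, ← hx]

lemma coef_funext {f g : (ι → Bool) → F} (h : ∀ T, coef f T = coef g T) : f = g := by
  funext x
  rw [eval_coef f x, eval_coef g x]
  exact Finset.sum_congr rfl (fun S _ => by rw [h S])

lemma coef_sum {s : Finset (Finset ι)} (c : Finset ι → F) (g : Finset ι → (ι → Bool) → F)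
    (T : Finset ι) :
    coef (fun x => ∑ S ∈ s, c S * g S x) T = ∑ S ∈ s, c S * coef (g S) T := by
  simp only [coef, Finset.mul_sum]
  rw [Finset.sum_comm]
  apply Finset.sum_congr rfl
  intro S _
  apply Finset.sum_congr rfl
  intro T' _
  ring

lemma coef_mono (S₀ T : Finset ι) :
    coef (mono S₀ : (ι → Bool) → F) T = if S₀ = T then 1 else 0 := by
  unfold coef
  rw [← isum' S₀ T]
  apply Finset.sum_congr rfl
  intro T' _
  rw [mono_chi]
  by_cases h : S₀ ⊆ T' <;> simp [h]

lemma coef_of_repr (f : (ι → Bool) → F) (α : Finset ι → F)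
    (h : ∀ x, f x = ∑ S : Finset ι, α S * mono S x) (T : Finset ι) :
    coef f T = α T := by
  have : f = fun x => ∑ S ∈ (Finset.univ : Finset (Finset ι)), α S * mono S x := funext h
  rw [this, coef_sum]
  rw [Finset.sum_congr rfl (fun S _ => by rw [coef_mono])]
  simp


lemma chi_insert (j : ι) (T : Finset ι) :
    (fun i => decide (i ∈ insert j T)) = Function.update (fun i => decide (i ∈ T)) j true := by
  funext i
  by_cases h : i = j
  · subst h; simp
  · simp [Function.update_of_ne h, h]

lemma coef_zero_of_indep (j : ι) (f : (ι → Bool) → F)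
    (hf : ∀ x b, f (Function.update x j b) = f x) (S : Finset ι) (hj : j ∈ S) :
    coef f S = 0 := by
  unfold coef
  have hS : S = insert j (S.erase j) := (Finset.insert_erase hj).symm
  rw [hS, Finset.powerset_insert, Finset.sum_union, Finset.sum_image]
  · rw [← Finset.sum_add_distrib]
    apply Finset.sum_eq_zero
    intro T hT
    rw [Finset.mem_powerset] at hT
    have hjT : j ∉ T := fun h => (Finset.notMem_erase j S) (hT h)
    have hfeq : f (fun i => decide (i ∈ insert j T)) = f (fun i => decide (i ∈ T)) := by
      rw [chi_insert, hf]
    rw [hfeq]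
    have hcard : ((insert j (S.erase j)) \ T).card
        = ((insert j (S.erase j)) \ insert j T).card + 1 := by
      have hjE : j ∉ S.erase j := Finset.notMem_erase j S
      have h1 : (insert j (S.erase j)) \ T = insert j ((S.erase j) \ T) := by
        ext a
        by_cases ha : a = j
        · subst ha; simp [hjT]
        · simp [ha]
      have h2 : (insert j (S.erase j)) \ insert j T = (S.erase j) \ T := by
        ext a
        by_cases ha : a = j
        · subst ha; simp [hjE]
        · simp [ha]
      rw [h1, h2, Finset.card_insert_of_notMem (fun hc => hjE (Finset.mem_sdiff.mp hc).1)]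
    rw [hcard, pow_succ]
    ring
  · intro A hA B hB hAB
    rw [Finset.mem_coe, Finset.mem_powerset] at hA hB
    have hjA : j ∉ A := fun h => (Finset.notMem_erase j S) (hA h)
    have hjB : j ∉ B := fun h => (Finset.notMem_erase j S) (hB h)
    have : (insert j A).erase j = (insert j B).erase j := by rw [hAB]
    rwa [Finset.erase_insert hjA, Finset.erase_insert hjB] at this
  · rw [Finset.disjoint_right]
    intro A hA
    rw [Finset.mem_image] at hA
    obtain ⟨B, hB, rfl⟩ := hA
    rw [Finset.mem_powerset]
    intro hsub
    exact (Finset.notMem_erase j S) (hsub (Finset.mem_insert_self j B))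

lemma mono_absorb (A : Finset ι) (x : ι → Bool) (i : ι) (hi : i ∈ A) :
    (if x i then (1:F) else 0) * mono A x = mono A x := by
  by_cases h : x i
  · rw [if_pos h, one_mul]
  · rw [if_neg h, zero_mul]
    exact (Finset.prod_eq_zero hi (by simp [h])).symm

lemma mono_update (S : Finset ι) (x : ι → Bool) (i j : ι) (hij : i ≠ j) :
    (mono S (Function.update x j (x i)) : F)
      = if j ∈ S then mono (insert i (S.erase j)) x else mono S x := by
  by_cases hj : j ∈ S
  · rw [if_pos hj]
    unfold mono
    rw [← Finset.mul_prod_erase S _ hj]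
    have h1 : (if Function.update x j (x i) j then (1:F) else 0)
        = if x i then 1 else 0 := by rw [Function.update_self]
    have h2 : ∏ k ∈ S.erase j, (if Function.update x j (x i) k then (1:F) else 0)
        = ∏ k ∈ S.erase j, (if x k then (1:F) else 0) := by
      apply Finset.prod_congr rfl
      intro k hk
      rw [Function.update_of_ne (Finset.ne_of_mem_erase hk)]
    rw [h1, h2]
    by_cases hi : i ∈ S.erase j
    · rw [Finset.insert_eq_self.mpr hi]
      exact mono_absorb _ x i hi
    · rw [Finset.prod_insert hi]
  · rw [if_neg hj]
    apply Finset.prod_congr rfl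
    intro k hk
    rw [Function.update_of_ne (fun h => hj (by rw [← h]; exact hk))]

lemma coef_subst (i j : ι) (hij : i ≠ j) (f : (ι → Bool) → F) (T : Finset ι) (hjT : j ∉ T) :
    coef (fun x => f (Function.update x j (x i))) T
      = coef f T
        + (if i ∈ T then coef f (insert j T) + coef f (insert j (T.erase i)) else 0) := by
  set σ : Finset ι → Finset ι := fun S => if j ∈ S then insert i (S.erase j) else S with hσ
  have hrepr : (fun x => f (Function.update x j (x i)))
      = fun x => ∑ S ∈ (Finset.univ : Finset (Finset ι)), coef f S * mono (σ S) x := by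
    funext x
    rw [eval_coef f (Function.update x j (x i))]
    apply Finset.sum_congr rfl
    intro S _
    rw [mono_update S x i j hij, hσ]
    by_cases hj : j ∈ S <;> simp [hj]
  rw [hrepr, coef_sum]
  have hterm : ∀ S ∈ (Finset.univ : Finset (Finset ι)),
      coef f S * coef (mono (σ S)) T = if σ S = T then coef f S else 0 := by
    intro S _
    rw [coef_mono]
    by_cases h : σ S = T <;> simp [h]
  rw [Finset.sum_congr rfl hterm, ← Finset.sum_filter]
  have hσT : σ T = T := by rw [hσ]; simp [hjT]
  by_cases hiT : i ∈ T
  · have hmem : ∀ S : Finset ι, σ S = T ↔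
        (S = T ∨ S = insert j T ∨ S = insert j (T.erase i)) := by
      intro S
      constructor
      · intro hS
        by_cases hj : j ∈ S
        · rw [hσ] at hS
          simp only [if_pos hj] at hS
          have hjA : j ∉ S.erase j := Finset.notMem_erase j S
          have hSA : S = insert j (S.erase j) := (Finset.insert_erase hj).symm
          by_cases hiA : i ∈ S.erase j
          · right; left
            rw [hSA]
            congr 1
            rw [← hS, Finset.insert_eq_self.mpr hiA]
          · right; right
            rw [hSA]
            congr 1
            apply Finset.Subset.antisymm
            · intro a ha
              rw [Finset.mem_erase]
              refine ⟨fun hai => hiA (hai ▸ ha), ?_⟩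
              rw [← hS]
              exact Finset.mem_insert_of_mem ha
            · intro a ha
              rw [Finset.mem_erase] at ha
              have : a ∈ insert i (S.erase j) := hS ▸ ha.2
              rw [Finset.mem_insert] at this
              exact this.resolve_left ha.1
        · left
          rw [hσ] at hS
          simpa only [if_neg hj] using hS
      · rintro (rfl | rfl | rfl)
        · exact hσT
        · rw [hσ]
          simp only [Finset.mem_insert_self, if_pos]
          rw [Finset.erase_insert hjT, Finset.insert_eq_self.mpr hiT]
        · have hjT' : j ∉ T.erase i := fun h => hjT (Finset.mem_of_mem_erase h)
          rw [hσ]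
          simp only [Finset.mem_insert_self, if_pos]
          rw [Finset.erase_insert hjT', Finset.insert_erase hiT]
    have hE : Finset.univ.filter (fun S => σ S = T)
        = insert T (insert (insert j T) ({insert j (T.erase i)} : Finset (Finset ι))) := by
      ext S
      simp only [Finset.mem_filter, Finset.mem_univ, true_and, Finset.mem_insert,
        Finset.mem_singleton]
      exact hmem S
    have hne1 : T ≠ insert j T := fun h => hjT (h ▸ Finset.mem_insert_self j T)
    have hne2 : T ≠ insert j (T.erase i) := fun h => hjT (h ▸ Finset.mem_insert_self j _)
    have hne3 : insert j T ≠ insert j (T.erase i) := by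
      intro h
      have : i ∈ insert j (T.erase i) := h ▸ Finset.mem_insert_of_mem hiT
      rw [Finset.mem_insert] at this
      rcases this with h' | h'
      · exact hij h'
      · exact Finset.notMem_erase i T h'
    rw [hE, Finset.sum_insert (by simp [hne1, hne2]),
      Finset.sum_insert (by simp [hne3]), Finset.sum_singleton, if_pos hiT]
  · have hmem : ∀ S : Finset ι, σ S = T ↔ S = T := by
      intro S
      constructor
      · intro hS
        by_cases hj : j ∈ S
        · exfalso
          rw [hσ] at hS
          simp only [if_pos hj] at hS
          exact hiT (hS ▸ Finset.mem_insert_self i _)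
        · rw [hσ] at hS
          simpa only [if_neg hj] using hS
      · rintro rfl; exact hσT
    have hE : Finset.univ.filter (fun S => σ S = T) = {T} := by
      ext S
      simp only [Finset.mem_filter, Finset.mem_univ, true_and, Finset.mem_singleton]
      exact hmem S
    rw [hE, Finset.sum_singleton, if_neg hiT, add_zero]

end Coef

lemma subst_indep {r : ℕ} {F : Type*} (i j : Fin r) (hij : i ≠ j)
    (Q : (Fin r → Bool) → F) (x : Fin r → Bool) (b : Bool) :
    subst j i Q (Function.update x j b) = subst j i Q x := by
  unfold subst
  rw [Function.update_idem, Function.update_of_ne hij]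

/-- Gluing, matching case. Let `ℓ ≥ d`, `r ≥ 2ℓ+2`, `I = [r]`, with the
`ℓ+1` disjoint pairs `{2h−1, 2h}`. Suppose each `P⁽ʰ⁾` is a degree-`d` multilinear polynomial
on `{0,1}^{I∖{2h}}` (encoded as a function on the full cube not depending on coordinate `2h`),
and the restrictions are pairwise consistent: `P⁽ʰ⁾|_{h'} = P⁽ʰ'⁾|_h` for all `h ≠ h'`.
Then there exists a degree-`d` multilinear `P` on `{0,1}^I` with `P|_h = P⁽ʰ⁾` for all `h`. -/
theorem stmt16 (F : Type*) [Field F] (d ℓ r : ℕ) (hdl : d ≤ ℓ) (hr : 2 * ℓ + 2 ≤ r)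
    (P : Fin (ℓ + 1) → ((Fin r → Bool) → F))
    (hdeg : ∀ h, IsPolyDeg d (P h))
    (hindep : ∀ h, ∀ x : Fin r → Bool, ∀ b : Bool,
      P h (Function.update x (pairIdx ℓ r hr h).2 b) = P h x)
    (hcompat : ∀ h h' : Fin (ℓ + 1), h ≠ h' →
      subst (pairIdx ℓ r hr h').2 (pairIdx ℓ r hr h').1 (P h)
        = subst (pairIdx ℓ r hr h).2 (pairIdx ℓ r hr h).1 (P h')) :
    ∃ Q : (Fin r → Bool) → F, IsPolyDeg d Q ∧
      ∀ h, subst (pairIdx ℓ r hr h).2 (pairIdx ℓ r hr h).1 Q = P h := by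
  classical
  set ip : Fin (ℓ+1) → Fin r := fun h => (pairIdx ℓ r hr h).1 with hip
  set jp : Fin (ℓ+1) → Fin r := fun h => (pairIdx ℓ r hr h).2 with hjp
  have hval_i : ∀ h, (ip h).val = 2 * h.val := fun h => rfl
  have hval_j : ∀ h, (jp h).val = 2 * h.val + 1 := fun h => rfl
  have hne_val : ∀ (a b : Fin r), a.val ≠ b.val → a ≠ b :=
    fun a b hv hab => hv (congrArg Fin.val hab)
  have hij_ne : ∀ h, ip h ≠ jp h := fun h =>
    hne_val _ _ (by rw [hval_i, hval_j]; omega)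
  have hipjp_ne : ∀ h h', ip h' ≠ jp h := fun h h' =>
    hne_val _ _ (by rw [hval_i, hval_j]; omega)
  have hjp_inj : ∀ h h', h' ≠ h → jp h' ≠ jp h := by
    intro h h' hne
    apply hne_val
    rw [hval_j, hval_j]
    intro hc
    exact hne (Fin.ext (by omega))
  -- existence of a pair disjoint from any small set
  have hexists : ∀ A : Finset (Fin r), A.card ≤ ℓ →
      ∃ h : Fin (ℓ+1), ip h ∉ A ∧ jp h ∉ A := by
    intro A hA
    by_contra hcon
    push_neg at hcon
    set φ : Fin (ℓ+1) → Fin r := fun h => if ip h ∈ A then ip h else jp h with hφ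
    have hφA : ∀ h, φ h ∈ A := by
      intro h
      rw [hφ]
      by_cases hi : ip h ∈ A
      · simpa [hi] using hi
      · simpa [hi] using hcon h hi
    have hφval : ∀ h, (φ h).val = 2 * h.val ∨ (φ h).val = 2 * h.val + 1 := by
      intro h
      rw [hφ]
      by_cases hi : ip h ∈ A
      · left; simp [hi, hval_i]
      · right; simp [hi, hval_j]
    have hinj : Set.InjOn φ (Finset.univ : Finset (Fin (ℓ+1))) := by
      intro a _ b _ hab
      have ha := hφval a
      have hb := hφval b
      have : (φ a).val = (φ b).val := congrArg Fin.val hab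
      exact Fin.ext (by omega)
    have hcard := Finset.card_le_card_of_injOn φ (fun h _ => hφA h) hinj
    rw [Finset.card_univ, Fintype.card_fin] at hcard
    omega
  -- coefficient facts for the P h
  have hcoefd : ∀ h (S : Finset (Fin r)), d < S.card → coef (P h) S = 0 := by
    intro h S hS
    obtain ⟨β, hβd, hβ⟩ := hdeg h
    rw [coef_of_repr (P h) β hβ]
    exact hβd S hS
  have hcoefj : ∀ h (S : Finset (Fin r)), jp h ∈ S → coef (P h) S = 0 := fun h S hS =>
    coef_zero_of_indep (jp h) (P h) (fun x b => hindep h x b) S hS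
  -- compatibility at the level of coefficients
  have hF4 : ∀ h h', h ≠ h' → ∀ T : Finset (Fin r), jp h ∉ T → jp h' ∉ T →
      coef (P h) T + (if ip h' ∈ T then
          coef (P h) (insert (jp h') T) + coef (P h) (insert (jp h') (T.erase (ip h'))) else 0)
      = coef (P h') T + (if ip h ∈ T then
          coef (P h') (insert (jp h) T) + coef (P h') (insert (jp h) (T.erase (ip h))) else 0) := by
    intro h h' hne T hjT hj'T
    have hc := hcompat h h' hne
    have hcc : coef (subst (jp h') (ip h') (P h)) T
        = coef (subst (jp h) (ip h) (P h')) T := by rw [hc]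
    rwa [show subst (jp h') (ip h') (P h)
          = fun x => P h (Function.update x (jp h') (x (ip h'))) from rfl,
      show subst (jp h) (ip h) (P h')
          = fun x => P h' (Function.update x (jp h) (x (ip h))) from rfl,
      coef_subst (ip h') (jp h') (hij_ne h') (P h) T hj'T,
      coef_subst (ip h) (jp h) (hij_ne h) (P h') T hjT] at hcc
  -- the glued coefficients
  set γ : Finset (Fin r) → F :=
    fun S => if hS : ∃ h, ip h ∉ S ∧ jp h ∉ S then coef (P hS.choose) S else 0 with hγ
  have hW : ∀ h (S : Finset (Fin r)), ip h ∉ S → jp h ∉ S → γ S = coef (P h) S := by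
    intro h S hiS hjS
    have hex : ∃ h0, ip h0 ∉ S ∧ jp h0 ∉ S := ⟨h, hiS, hjS⟩
    rw [hγ]
    simp only
    rw [dif_pos hex]
    obtain ⟨hi0, hj0⟩ := hex.choose_spec
    by_cases he : hex.choose = h
    · rw [he]
    · have key := hF4 hex.choose h he S hj0 hjS
      rwa [if_neg hiS, if_neg hi0, add_zero, add_zero] at key
  have hWd : ∀ S : Finset (Fin r), d < S.card → γ S = 0 := by
    intro S hS
    rw [hγ]
    simp only
    split
    · exact hcoefd _ S hS
    · rfl
  set Q : (Fin r → Bool) → F := fun x => ∑ S : Finset (Fin r), γ S * mono S x with hQdef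
  have hQcoef : ∀ T, coef Q T = γ T := fun T => coef_of_repr Q γ (fun x => rfl) T
  refine ⟨Q, ⟨γ, hWd, fun x => rfl⟩, ?_⟩
  intro h
  apply coef_funext
  intro T
  by_cases hjT : jp h ∈ T
  · rw [hcoefj h T hjT]
    exact coef_zero_of_indep (jp h) _
      (fun x b => subst_indep (ip h) (jp h) (hij_ne h) Q x b) T hjT
  · have hsub : coef (subst (jp h) (ip h) Q) T
        = coef Q T + (if ip h ∈ T then
            coef Q (insert (jp h) T) + coef Q (insert (jp h) (T.erase (ip h))) else 0) :=
      coef_subst (ip h) (jp h) (hij_ne h) Q T hjT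
    rw [hsub]
    simp only [hQcoef]
    by_cases hiT : ip h ∈ T
    · by_cases hdT : d < T.card
      · have hc1 : d < (insert (jp h) T).card := by
          rw [Finset.card_insert_of_notMem hjT]; omega
        have hc2 : d < (insert (jp h) (T.erase (ip h))).card := by
          have hjer : jp h ∉ T.erase (ip h) := fun hc => hjT (Finset.mem_of_mem_erase hc)
          rw [Finset.card_insert_of_notMem hjer, Finset.card_erase_of_mem hiT]
          have := Finset.card_pos.mpr ⟨ip h, hiT⟩
          omega
        rw [hcoefd h T hdT, if_pos hiT, hWd T hdT, hWd _ hc1, hWd _ hc2]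
        simp
      · push_neg at hdT
        obtain ⟨h', hi', hj'⟩ := hexists T (le_trans hdT hdl)
        have hne : h' ≠ h := fun he => hi' (he ▸ hiT)
        have hm1 : ip h' ∉ insert (jp h) T := by
          rw [Finset.mem_insert]
          rintro (hc | hc)
          · exact hipjp_ne h h' hc
          · exact hi' hc
        have hm2 : jp h' ∉ insert (jp h) T := by
          rw [Finset.mem_insert]
          rintro (hc | hc)
          · exact hjp_inj h h' hne hc
          · exact hj' hc
        have hm3 : ip h' ∉ insert (jp h) (T.erase (ip h)) := by
          rw [Finset.mem_insert]
          rintro (hc | hc)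
          · exact hipjp_ne h h' hc
          · exact hi' (Finset.mem_of_mem_erase hc)
        have hm4 : jp h' ∉ insert (jp h) (T.erase (ip h)) := by
          rw [Finset.mem_insert]
          rintro (hc | hc)
          · exact hjp_inj h h' hne hc
          · exact hj' (Finset.mem_of_mem_erase hc)
        have e1 : γ T = coef (P h') T := hW h' T hi' hj'
        have e2 : γ (insert (jp h) T) = coef (P h') (insert (jp h) T) := hW h' _ hm1 hm2
        have e3 : γ (insert (jp h) (T.erase (ip h)))
            = coef (P h') (insert (jp h) (T.erase (ip h))) := hW h' _ hm3 hm4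
        have key := hF4 h' h hne T hj' hjT
        rw [if_pos hiT, if_neg hi', add_zero] at key
        rw [if_pos hiT, e1, e2, e3, key]
    · rw [if_neg hiT, add_zero, hW h T hiT hjT]
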